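/- Let β, β_Γ : ℝ → Set ℝ be maximal monotone graphs with 0 ∈ β(0), 0 ∈ β_Γ(0), and suppose D(β_Γ) ⊆ D(β) and there exist constants ϱ ≥ 1 and c₀ > 0 such that |β°(r)| ≤ ϱ |β_Γ°(r)| + c₀ for all r ∈ D(β_Γ). Then for every ε ∈ (0,1] and every r ∈ ℝ, the Yosida approximations satisfy |β_ε(r)| ≤ ϱ |β_{Γ,ε}(r)| + c₀ (with the same constants ϱ and c₀). -/

import Mathlib

/-- A monotone graph on ℝ. -/
def IsMonotoneGraph (β : ℝ → Set ℝ) : Prop :=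
  ∀ ⦃x y u v : ℝ⦄, u ∈ β x → v ∈ β y → 0 ≤ (u - v) * (x - y)

/-- A maximal monotone graph on ℝ. -/
def IsMaximalMonotone (β : ℝ → Set ℝ) : Prop :=
  IsMonotoneGraph β ∧
    ∀ ⦃x u : ℝ⦄, (∀ ⦃y v : ℝ⦄, v ∈ β y → 0 ≤ (u - v) * (x - y)) → u ∈ β x

/-- `J` is the (single-valued) resolvent `(I + ε β)⁻¹`, i.e. for every `r`,
`J r + ε * v = r` for some `v ∈ β (J r)`; equivalently `(r - J r)/ε ∈ β (J r)`. -/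
def IsResolvent (β : ℝ → Set ℝ) (ε : ℝ) (J : ℝ → ℝ) : Prop :=
  ∀ r : ℝ, (r - J r) / ε ∈ β (J r)

/-- `b` is the element of `β r` of minimal absolute value (the minimal section `β°(r)`). -/
def IsMinimalSection (β : ℝ → Set ℝ) (r b : ℝ) : Prop :=
  b ∈ β r ∧ ∀ v ∈ β r, |b| ≤ |v|

/-- A nonempty closed subset of ℝ has an element of minimal absolute value. -/
lemma exists_min_abs (S : Set ℝ) (hS : IsClosed S) (hne : S.Nonempty) :
    ∃ b ∈ S, ∀ v ∈ S, |b| ≤ |v| := by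
  obtain ⟨v₀, hv₀⟩ := hne
  have hK : IsCompact (S ∩ Set.Icc (-|v₀|) |v₀|) :=
    (isCompact_Icc.inter_left hS)
  have hneK : (S ∩ Set.Icc (-|v₀|) |v₀|).Nonempty :=
    ⟨v₀, hv₀, neg_abs_le v₀, le_abs_self v₀⟩
  obtain ⟨b, hbK, hbmin⟩ := hK.exists_isMinOn hneK (continuous_abs.continuousOn)
  refine ⟨b, hbK.1, fun v hv => ?_⟩
  by_cases h : |v| ≤ |v₀|
  · exact hbmin ⟨hv, neg_le_of_abs_le h, le_of_abs_le h⟩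
  · have hb0 : |b| ≤ |v₀| := hbmin ⟨hv₀, neg_abs_le v₀, le_abs_self v₀⟩
    linarith [not_le.mp h]

/-- Values of a maximal monotone graph are closed sets. -/
lemma isClosed_of_maximal {β : ℝ → Set ℝ} (h : IsMaximalMonotone β) (x : ℝ) :
    IsClosed (β x) := by
  obtain ⟨hm, hM⟩ := h
  have hEq : β x = ⋂ (y : ℝ), ⋂ (v : ℝ), ⋂ (_ : v ∈ β y), {u : ℝ | 0 ≤ (u - v) * (x - y)} := by
    ext u
    simp only [Set.mem_iInter, Set.mem_setOf_eq]
    constructor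
    · intro hu y v hv
      exact hm hu hv
    · intro hu
      exact hM fun y v hv => hu y v hv
  rw [hEq]
  refine isClosed_iInter fun y => isClosed_iInter fun v => isClosed_iInter fun _ => ?_
  exact isClosed_le continuous_const ((continuous_id.sub continuous_const).mul continuous_const)

set_option maxHeartbeats 1600000 in
/-- If the minimal section of  is dominated by that of  on , then
the same domination (with the same constants) holds for the Yosida approximations. -/
theorem yosida_domination (β βΓ : ℝ → Set ℝ)
    (hβ : IsMaximalMonotone β) (hβΓ : IsMaximalMonotone βΓ)
    (h0 : (0:ℝ) ∈ β 0) (h0Γ : (0:ℝ) ∈ βΓ 0)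
    (hD : ∀ r : ℝ, (βΓ r).Nonempty → (β r).Nonempty)
    (ϱ c₀ : ℝ) (hϱ : 1 ≤ ϱ) (hc₀ : 0 < c₀)
    (hdom : ∀ r b bΓ : ℝ, IsMinimalSection β r b → IsMinimalSection βΓ r bΓ →
      |b| ≤ ϱ * |bΓ| + c₀) :
    ∀ ε : ℝ, 0 < ε → ε ≤ 1 → ∀ J JΓ : ℝ → ℝ,
      IsResolvent β ε J → IsResolvent βΓ ε JΓ →
      ∀ r : ℝ, |(r - J r) / ε| ≤ ϱ * |(r - JΓ r) / ε| + c₀ := by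
  intro ε hε hε1 J JΓ hJ hJΓ r
  obtain ⟨hβm, hβM⟩ := hβ
  obtain ⟨hβΓm, hβΓM⟩ := hβΓ
  set y := J r with hy
  set x := JΓ r with hx
  set b := (r - y) / ε with hbdef
  set bΓ := (r - x) / ε with hbΓdef
  have hb : b ∈ β y := hJ r
  have hbΓ : bΓ ∈ βΓ x := hJΓ r
  have hyb : y = r - ε * b := by
    rw [hbdef]; field_simp; ring
  have hxbΓ : x = r - ε * bΓ := by
    rw [hbΓdef]; field_simp; ring
  clear_value y x b bΓ
  -- sign facts : b*r ≥ ε b² ≥ 0 and similarly for bΓ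
  have hbsign : ε * b ^ 2 ≤ b * r := by
    have h1 : 0 ≤ b * (r - ε * b) := by
      rw [← hyb]; nlinarith [hβm hb h0]
    nlinarith [h1]
  have hbΓsign : ε * bΓ ^ 2 ≤ bΓ * r := by
    have h1 : 0 ≤ bΓ * (r - ε * bΓ) := by
      rw [← hxbΓ]; nlinarith [hβΓm hbΓ h0Γ]
    nlinarith [h1]
  by_cases hcmp : |b| ≤ |bΓ|
  · have : |bΓ| ≤ ϱ * |bΓ| + c₀ := by nlinarith [abs_nonneg bΓ]
    linarith
  push_neg at hcmp
  -- minimal sections at x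
  have hxΓne : (βΓ x).Nonempty := ⟨bΓ, hbΓ⟩
  have hxne : (β x).Nonempty := hD x hxΓne
  obtain ⟨b0, hb0mem, hb0min⟩ :=
    exists_min_abs (β x) (isClosed_of_maximal ⟨hβm, hβM⟩ x) hxne
  obtain ⟨bΓ0, hbΓ0mem, hbΓ0min⟩ :=
    exists_min_abs (βΓ x) (isClosed_of_maximal ⟨hβΓm, hβΓM⟩ x) hxΓne
  have hdomx : |b0| ≤ ϱ * |bΓ0| + c₀ :=
    hdom x b0 bΓ0 ⟨hb0mem, hb0min⟩ ⟨hbΓ0mem, hbΓ0min⟩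
  have hbΓ0le : |bΓ0| ≤ |bΓ| := hbΓ0min bΓ hbΓ
  have hmono : 0 ≤ (b - b0) * (y - x) := hβm hb hb0mem
  have key : |b| ≤ |b0| := by
    rcases le_or_gt 0 r with hr | hr
    · -- r ≥ 0 : b ≥ 0, bΓ ≥ 0
      have hbpos : 0 ≤ b := by
        by_contra h
        push_neg at h
        have h1 : b * r ≤ 0 := mul_nonpos_of_nonpos_of_nonneg h.le hr
        have h2 : 0 < b ^ 2 := by nlinarith
        linarith [mul_pos hε h2]
      have hbΓpos : 0 ≤ bΓ := by
        by_contra h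
        push_neg at h
        have h1 : bΓ * r ≤ 0 := mul_nonpos_of_nonpos_of_nonneg h.le hr
        have h2 : 0 < bΓ ^ 2 := by nlinarith
        linarith [mul_pos hε h2]
      have hblt : bΓ < b := by
        rw [abs_of_nonneg hbpos, abs_of_nonneg hbΓpos] at hcmp
        exact hcmp
      have hyx : y - x = ε * (bΓ - b) := by rw [hyb, hxbΓ]; ring
      have hyxneg : y - x < 0 := by
        rw [hyx]; nlinarith
      have : b ≤ b0 := by nlinarith
      calc |b| = b := abs_of_nonneg hbpos
        _ ≤ b0 := this
        _ ≤ |b0| := le_abs_self b0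
    · -- r < 0 : b ≤ 0, bΓ ≤ 0
      have hbneg : b ≤ 0 := by
        by_contra h
        push_neg at h
        have h1 : b * r ≤ 0 := mul_nonpos_of_nonneg_of_nonpos h.le hr.le
        have h2 : 0 < b ^ 2 := by nlinarith
        linarith [mul_pos hε h2]
      have hbΓneg : bΓ ≤ 0 := by
        by_contra h
        push_neg at h
        have h1 : bΓ * r ≤ 0 := mul_nonpos_of_nonneg_of_nonpos h.le hr.le
        have h2 : 0 < bΓ ^ 2 := by nlinarith
        linarith [mul_pos hε h2]
      have hblt : b < bΓ := by
        rw [abs_of_nonpos hbneg, abs_of_nonpos hbΓneg] at hcmp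
        linarith
      have hyx : y - x = ε * (bΓ - b) := by rw [hyb, hxbΓ]; ring
      have hyxpos : 0 < y - x := by
        rw [hyx]; nlinarith
      have : b0 ≤ b := by nlinarith
      calc |b| = -b := abs_of_nonpos hbneg
        _ ≤ -b0 := by linarith
        _ ≤ |b0| := neg_le_abs b0
  calc |b| ≤ |b0| := key
    _ ≤ ϱ * |bΓ0| + c₀ := hdomx
    _ ≤ ϱ * |bΓ| + c₀ := by nlinarith [abs_nonneg bΓ0]
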